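/- Let X, Y be metric measure spaces and p : X → Y a 1-Lipschitz map with p_*m_X = m_Y. Suppose there is a Borel set Ω ⊂ Y of full m_Y-measure such that the disintegration {μ_y} of m_X along p satisfies W₂(μ_y, μ_{y'}) = d_Y(y, y') for all y, y' ∈ Ω. Then p is a submetry: p(B_r(x)) = B_r(p(x)) for every x ∈ X and r > 0. -/

import Mathlib

open MeasureTheory Filter Set
open scoped ENNReal NNReal

noncomputable section

namespace MMF

/-- A transport plan (coupling) between two measures. -/
def IsCoupling {X Y : Type*} [MeasurableSpace X] [MeasurableSpace Y]
    (π : Measure (X × Y)) (μ : Measure X) (ν : Measure Y) : Prop :=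
  π.map Prod.fst = μ ∧ π.map Prod.snd = ν

/-- The `L^q`-Wasserstein distance, with values in `[0, ∞]`. -/
noncomputable def W {X : Type*} [MeasurableSpace X] [PseudoEMetricSpace X]
    (q : ℝ) (μ ν : Measure X) : ℝ≥0∞ :=
  ⨅ π ∈ {π : Measure (X × X) | IsCoupling π μ ν},
    (∫⁻ p, edist p.1 p.2 ^ q ∂π) ^ (1 / q)

end MMF

open MMF

lemma extract_coupling {X Y : Type*} [MetricSpace X] [MetricSpace Y]
    [TopologicalSpace.SeparableSpace X]
    [MeasurableSpace X] [BorelSpace X] [MeasurableSpace Y] [BorelSpace Y]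
    {p : X → Y} (hp : LipschitzWith 1 p)
    (μ ν : Measure X) [IsProbabilityMeasure μ] [IsProbabilityMeasure ν]
    {y y₂ : Y} (hμ : μ.map p = Measure.dirac y) (hν : ν.map p = Measure.dirac y₂)
    (hWeq : W 2 μ ν = edist y y₂)
    {m : ℝ≥0∞} (hm0 : m ≠ 0) (hm1 : m ≠ ∞)
    {ε : ℝ≥0∞} (hε0 : ε ≠ 0) (hεt : ε ≠ ∞) :
    ∃ π : Measure (X × X), IsCoupling π μ ν ∧
      π {q : X × X | ¬(p q.1 = y ∧ p q.2 = y₂)} = 0 ∧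
      π {q : X × X | edist y y₂ + ε ≤ edist q.1 q.2} < m := by
  have hpm : Measurable p := hp.continuous.measurable
  haveI : SecondCountableTopology X := UniformSpace.secondCountable_of_separable X
  set D := edist y y₂ with hDdef
  have hDt : D ≠ ∞ := edist_ne_top y y₂
  have hDlt : D ^ (2:ℝ) < (D + ε) ^ (2:ℝ) :=
    ENNReal.rpow_lt_rpow (ENNReal.lt_add_right hDt hε0) (by norm_num)
  have hD2t : D ^ (2:ℝ) ≠ ∞ := ENNReal.rpow_ne_top_of_nonneg (by norm_num) hDt
  have hDε2t : (D + ε) ^ (2:ℝ) ≠ ∞ :=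
    ENNReal.rpow_ne_top_of_nonneg (by norm_num) (by finiteness)
  set gap : ℝ≥0∞ := (D + ε) ^ (2:ℝ) - D ^ (2:ℝ) with hgapdef
  have hgap0 : gap ≠ 0 := (tsub_pos_of_lt hDlt).ne'
  have hgapt : gap ≠ ∞ := (tsub_le_self.trans_lt hDε2t.lt_top).ne
  set m' := m / 2 with hm'def
  have hm'0 : m' ≠ 0 := by
    rw [hm'def]
    intro h
    rcases ENNReal.div_eq_zero_iff.mp h with h | h
    · exact hm0 h
    · exact (by norm_num : (2:ℝ≥0∞) ≠ ∞) h
  have hm'm : m' < m := ENNReal.half_lt_self hm0 hm1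
  set c := m' * gap with hcdef
  have hc0 : c ≠ 0 := mul_ne_zero hm'0 hgap0
  -- extract a near-optimal coupling
  have hWlt : W 2 μ ν < (D ^ (2:ℝ) + c) ^ (1/(2:ℝ)) := by
    rw [hWeq]
    have h1 : D = (D ^ (2:ℝ)) ^ (1/(2:ℝ)) := by
      rw [← ENNReal.rpow_mul]; norm_num
    calc D = (D ^ (2:ℝ)) ^ (1/(2:ℝ)) := h1
      _ < (D ^ (2:ℝ) + c) ^ (1/(2:ℝ)) :=
        ENNReal.rpow_lt_rpow (ENNReal.lt_add_right hD2t hc0) (by norm_num)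
  rw [W] at hWlt
  obtain ⟨π, hmem⟩ := iInf_lt_iff.mp hWlt
  obtain ⟨hπ, hlt⟩ := iInf_lt_iff.mp hmem
  have hπC : IsCoupling π μ ν := hπ
  have hint : (∫⁻ q, edist q.1 q.2 ^ (2:ℝ) ∂π) < D ^ (2:ℝ) + c := by
    by_contra h
    push_neg at h
    have := ENNReal.rpow_le_rpow h (by norm_num : (0:ℝ) ≤ 1/2)
    exact absurd this (not_le.mpr hlt)
  have hmfst : π.map Prod.fst = μ := hπC.1
  have hmsnd : π.map Prod.snd = ν := hπC.2
  have hπ1 : π Set.univ = 1 := by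
    have h2 : π.map Prod.fst Set.univ = 1 := by rw [hmfst]; simp
    rwa [Measure.map_apply measurable_fst MeasurableSet.univ, Set.preimage_univ] at h2
  set A := p ⁻¹' {y} with hA
  set B := p ⁻¹' {y₂} with hB
  have hAm : MeasurableSet A := hpm (measurableSet_singleton y)
  have hBm : MeasurableSet B := hpm (measurableSet_singleton y₂)
  have hμA : μ Aᶜ = 0 := by
    have h2 : μ.map p {y}ᶜ = 0 := by
      rw [hμ, Measure.dirac_apply' _ (measurableSet_singleton y).compl]
      simp
    rwa [Measure.map_apply hpm (measurableSet_singleton y).compl] at h2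
  have hνB : ν Bᶜ = 0 := by
    have h2 : ν.map p {y₂}ᶜ = 0 := by
      rw [hν, Measure.dirac_apply' _ (measurableSet_singleton y₂).compl]
      simp
    rwa [Measure.map_apply hpm (measurableSet_singleton y₂).compl] at h2
  set S := A ×ˢ B with hSdef
  have hSm : MeasurableSet S := hAm.prod hBm
  have hSc : π Sᶜ = 0 := by
    have hsub : Sᶜ ⊆ (Prod.fst ⁻¹' Aᶜ) ∪ (Prod.snd ⁻¹' Bᶜ) := by
      intro q hq
      by_contra h
      simp only [Set.mem_union, Set.mem_preimage, Set.mem_compl_iff, not_or, not_not] at h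
      exact hq ⟨h.1, h.2⟩
    refine le_antisymm ?_ zero_le
    calc π Sᶜ ≤ π (Prod.fst ⁻¹' Aᶜ) + π (Prod.snd ⁻¹' Bᶜ) :=
          (measure_mono hsub).trans (measure_union_le _ _)
      _ = μ Aᶜ + ν Bᶜ := by
          rw [← Measure.map_apply measurable_fst hAm.compl,
            ← Measure.map_apply measurable_snd hBm.compl, hmfst, hmsnd]
      _ = 0 := by rw [hμA, hνB, add_zero]
  set T := {q : X × X | D + ε ≤ edist q.1 q.2} with hT
  have hedm : Measurable (fun q : X × X => edist q.1 q.2) :=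
    measurable_fst.edist measurable_snd
  have hTm : MeasurableSet T := measurableSet_le measurable_const hedm
  have hS1 : π S = 1 := by
    have h2 : π S + π Sᶜ = 1 := by rw [measure_add_measure_compl hSm, hπ1]
    rwa [hSc, add_zero] at h2
  set u := π (S ∩ T) with hu
  set v := π (S \ T) with hv
  have huv : u + v = 1 := by rw [hu, hv, measure_inter_add_diff S hTm, hS1]
  have hlow : (D+ε) ^ (2:ℝ) * u + D ^ (2:ℝ) * v ≤ ∫⁻ q, edist q.1 q.2 ^ (2:ℝ) ∂π := by
    have hpoint : ∀ q : X × X, (S ∩ T).indicator (fun _ => (D+ε) ^ (2:ℝ)) q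
        + (S \ T).indicator (fun _ => D ^ (2:ℝ)) q ≤ edist q.1 q.2 ^ (2:ℝ) := by
      intro q
      by_cases h1 : q ∈ S ∩ T
      · rw [Set.indicator_of_mem h1, Set.indicator_of_notMem (fun h2 => h2.2 h1.2), add_zero]
        exact ENNReal.rpow_le_rpow h1.2 (by norm_num)
      · rw [Set.indicator_of_notMem h1, zero_add]
        by_cases h2 : q ∈ S \ T
        · rw [Set.indicator_of_mem h2]
          refine ENNReal.rpow_le_rpow ?_ (by norm_num)
          have hq1 : p q.1 = y := h2.1.1
          have hq2 : p q.2 = y₂ := h2.1.2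
          calc D = edist (p q.1) (p q.2) := by rw [hq1, hq2]
            _ ≤ edist q.1 q.2 := by simpa using hp q.1 q.2
        · rw [Set.indicator_of_notMem h2]; exact zero_le
    calc (D+ε) ^ (2:ℝ) * u + D ^ (2:ℝ) * v
        = ∫⁻ q, (S ∩ T).indicator (fun _ => (D+ε) ^ (2:ℝ)) q ∂π
          + ∫⁻ q, (S \ T).indicator (fun _ => D ^ (2:ℝ)) q ∂π := by
          rw [lintegral_indicator_const (hSm.inter hTm), lintegral_indicator_const (hSm.diff hTm),
            hu, hv]
      _ = ∫⁻ q, (S ∩ T).indicator (fun _ => (D+ε) ^ (2:ℝ)) q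
          + (S \ T).indicator (fun _ => D ^ (2:ℝ)) q ∂π :=
          (lintegral_add_left (measurable_const.indicator (hSm.inter hTm)) _).symm
      _ ≤ ∫⁻ q, edist q.1 q.2 ^ (2:ℝ) ∂π := lintegral_mono hpoint
  have hcalc : (D+ε) ^ (2:ℝ) * u + D ^ (2:ℝ) * v = D ^ (2:ℝ) + gap * u := by
    have h1 : (D+ε) ^ (2:ℝ) = D ^ (2:ℝ) + gap := (add_tsub_cancel_of_le hDlt.le).symm
    rw [h1]
    calc (D ^ (2:ℝ) + gap) * u + D ^ (2:ℝ) * v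
        = D ^ (2:ℝ) * (u + v) + gap * u := by ring
      _ = D ^ (2:ℝ) + gap * u := by rw [huv, mul_one]
  have hlt2 : D ^ (2:ℝ) + gap * u < D ^ (2:ℝ) + c := lt_of_le_of_lt (hcalc ▸ hlow) hint
  have hgu : gap * u < gap * m' := by
    have h3 := (ENNReal.add_lt_add_iff_left hD2t).mp hlt2
    rwa [hcdef, mul_comm m' gap] at h3
  have hum : u < m' := (ENNReal.mul_lt_mul_iff_right hgap0 hgapt).mp hgu
  refine ⟨π, hπC, ?_, ?_⟩
  · have hEq : {q : X × X | ¬(p q.1 = y ∧ p q.2 = y₂)} = Sᶜ := by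
      ext q; simp [hSdef, hA, hB, Set.mem_prod]
    rw [hEq]; exact hSc
  · have h1 : π T ≤ π ((S ∩ T) ∪ Sᶜ) := by
      refine measure_mono fun q hq => ?_
      by_cases h : q ∈ S
      · exact Or.inl ⟨h, hq⟩
      · exact Or.inr h
    have h2 : π ((S ∩ T) ∪ Sᶜ) ≤ u + 0 := by
      rw [hu]
      refine (measure_union_le _ _).trans ?_
      rw [hSc]
    have h3 : u + 0 < m := by rw [add_zero]; exact hum.trans hm'm
    exact lt_of_le_of_lt (h1.trans h2) h3

lemma fiber_witness {X Y : Type*} [MeasurableSpace X] [MeasurableSpace Y]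
    {p : X → Y} (hpm : Measurable p)
    (μ : Measure X) {y : Y} (hμ : μ.map p = Measure.dirac y)
    {s : Set X} (hs : 0 < μ s) (hy : MeasurableSet ({y} : Set Y)) :
    ∃ a ∈ s, p a = y := by
  have hfib : μ (p ⁻¹' {y})ᶜ = 0 := by
    have h2 : μ.map p {y}ᶜ = 0 := by
      rw [hμ, Measure.dirac_apply' _ hy.compl]
      simp
    rwa [Measure.map_apply hpm hy.compl] at h2
  by_contra h
  push_neg at h
  have hsub : s ⊆ (p ⁻¹' {y})ᶜ := by
    intro a ha hmem
    exact h a ha hmem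
  have : μ s = 0 := le_antisymm ((measure_mono hsub).trans_eq hfib) zero_le
  exact absurd this hs.ne'

lemma step_lemma {X Y : Type*} [MetricSpace X] [MetricSpace Y]
    [TopologicalSpace.SeparableSpace X]
    [MeasurableSpace X] [BorelSpace X] [MeasurableSpace Y] [BorelSpace Y]
    {p : X → Y} (hp : LipschitzWith 1 p)
    (μ ν : Measure X) [IsProbabilityMeasure μ] [IsProbabilityMeasure ν]
    {y y₂ : Y} (hμ : μ.map p = Measure.dirac y) (hν : ν.map p = Measure.dirac y₂)
    (hWeq : W 2 μ ν = edist y y₂)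
    (x₀ : X) {δ ε δ₂ : ℝ} (hδ : 0 < δ) (hε : 0 < ε) (hδ₂ : 0 < δ₂)
    (hpos : 0 < μ (Metric.ball x₀ δ)) :
    ∃ x₂ : X, 0 < ν (Metric.ball x₂ δ₂) ∧ dist x₀ x₂ < δ + dist y y₂ + ε + δ₂ := by
  have hpm : Measurable p := hp.continuous.measurable
  have hmt : μ (Metric.ball x₀ δ) ≠ ∞ := measure_ne_top μ _
  obtain ⟨π, hπC, hfib, hTlt⟩ :=
    extract_coupling hp μ ν hμ hν hWeq hpos.ne' hmt
      (ε := ENNReal.ofReal ε) (ENNReal.ofReal_pos.mpr hε).ne' ENNReal.ofReal_ne_top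
  haveI : Nonempty X := ⟨x₀⟩
  set u : ℕ → X := TopologicalSpace.denseSeq X with hu
  set Sf := {q : X × X | p q.1 = y ∧ p q.2 = y₂} with hSf
  set T := {q : X × X | edist y y₂ + ENNReal.ofReal ε ≤ edist q.1 q.2} with hT
  have hfib' : π Sfᶜ = 0 := hfib
  set E := (Metric.ball x₀ δ ×ˢ (Set.univ : Set X)) ∩ (Sf ∩ Tᶜ) with hE
  have hballm : π (Metric.ball x₀ δ ×ˢ (Set.univ : Set X)) = μ (Metric.ball x₀ δ) := by
    rw [← hπC.1, Measure.map_apply measurable_fst measurableSet_ball]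
    congr 1
    ext q
    simp [Set.mem_prod]
  have hEne : π E ≠ 0 := by
    intro h0
    have hsub : Metric.ball x₀ δ ×ˢ (Set.univ : Set X) ⊆ E ∪ (Sfᶜ ∪ T) := by
      intro q hq
      by_cases h1 : q ∈ Sf
      · by_cases h2 : q ∈ T
        · exact Or.inr (Or.inr h2)
        · exact Or.inl ⟨hq, h1, h2⟩
      · exact Or.inr (Or.inl h1)
    have hle : μ (Metric.ball x₀ δ) ≤ π E + (π Sfᶜ + π T) := by
      rw [← hballm]
      exact (measure_mono hsub).trans
        ((measure_union_le _ _).trans (add_le_add le_rfl (measure_union_le _ _)))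
    rw [h0, hfib', zero_add, zero_add] at hle
    exact absurd hle (not_le.mpr hTlt)
  have hcover : E ⊆ ⋃ n : ℕ, E ∩ ((Set.univ : Set X) ×ˢ Metric.ball (u n) δ₂) := by
    intro q hq
    obtain ⟨n, hn⟩ := (TopologicalSpace.denseRange_denseSeq X).exists_dist_lt q.2 hδ₂
    exact Set.mem_iUnion.mpr ⟨n, hq, Set.mem_univ _, Metric.mem_ball.mpr hn⟩
  obtain ⟨n, hn⟩ : ∃ n, π (E ∩ ((Set.univ : Set X) ×ˢ Metric.ball (u n) δ₂)) ≠ 0 := by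
    by_contra h
    push_neg at h
    apply hEne
    refine le_antisymm ?_ zero_le
    calc π E ≤ ∑' n, π (E ∩ ((Set.univ : Set X) ×ˢ Metric.ball (u n) δ₂)) :=
          (measure_mono hcover).trans (measure_iUnion_le _)
      _ = 0 := by simp [h]
  have hne : (E ∩ ((Set.univ : Set X) ×ˢ Metric.ball (u n) δ₂)).Nonempty := by
    rw [Set.nonempty_iff_ne_empty]
    intro he
    exact hn (by rw [he, measure_empty])
  obtain ⟨⟨a, b⟩, hmem⟩ := hne
  obtain ⟨⟨⟨haball, -⟩, ⟨hpa, hpb⟩, hnT⟩, -, hbball⟩ := hmem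
  refine ⟨u n, ?_, ?_⟩
  · have hsnd : π ((Set.univ : Set X) ×ˢ Metric.ball (u n) δ₂) = ν (Metric.ball (u n) δ₂) := by
      rw [← hπC.2, Measure.map_apply measurable_snd measurableSet_ball]
      congr 1
      ext q
      simp [Set.mem_prod]
    calc (0:ℝ≥0∞) < π (E ∩ ((Set.univ : Set X) ×ˢ Metric.ball (u n) δ₂)) := pos_iff_ne_zero.mpr hn
      _ ≤ π ((Set.univ : Set X) ×ˢ Metric.ball (u n) δ₂) := measure_mono Set.inter_subset_right
      _ = ν (Metric.ball (u n) δ₂) := hsnd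
  · have hab : dist a b < dist y y₂ + ε := by
      have h1 : edist a b < edist y y₂ + ENNReal.ofReal ε := not_le.mp hnT
      rw [edist_dist, edist_dist, ← ENNReal.ofReal_add dist_nonneg hε.le] at h1
      exact (ENNReal.ofReal_lt_ofReal_iff (by positivity)).mp h1
    have h1 : dist x₀ a < δ := by
      rw [dist_comm]
      exact Metric.mem_ball.mp haball
    have h3 : dist b (u n) < δ₂ := Metric.mem_ball.mp hbball
    calc dist x₀ (u n) ≤ dist x₀ a + dist a b + dist b (u n) := dist_triangle4 x₀ a b (u n)
      _ < δ + (dist y y₂ + ε) + δ₂ := by linarith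
      _ = δ + dist y y₂ + ε + δ₂ := by ring


/-- if a 1-Lipschitz map `p : X → Y` between metric measure spaces with
`p_*m_X = m_Y` admits a disintegration `{μ_y}` satisfying `W₂(μ_y, μ_{y'}) = d_Y(y, y')`
on a Borel set `Ω` of full measure, then `p` is a submetry:
`p(B_r(x)) = B_r(p(x))` for all `x` and `r > 0`. -/
theorem lipschitz_disintegration_submetry
    {X Y : Type*} [MetricSpace X] [MetricSpace Y]
    [CompleteSpace X] [CompleteSpace Y]
    [TopologicalSpace.SeparableSpace X] [TopologicalSpace.SeparableSpace Y]
    [MeasurableSpace X] [BorelSpace X] [MeasurableSpace Y] [BorelSpace Y]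
    (mX : Measure X) (mY : Measure Y)
    [IsLocallyFiniteMeasure mX] [IsLocallyFiniteMeasure mY]
    (hsuppX : ∀ (x : X) (r : ℝ), 0 < r → 0 < mX (Metric.ball x r))
    (hsuppY : ∀ (y : Y) (r : ℝ), 0 < r → 0 < mY (Metric.ball y r))
    (p : X → Y) (hp : LipschitzWith 1 p) (hpush : mX.map p = mY)
    -- the disintegration of `m_X` along `p`
    (μfam : Y → Measure X)
    (hprob : ∀ y, IsProbabilityMeasure (μfam y))
    (hmeas : ∀ A : Set X, MeasurableSet A → Measurable fun y => μfam y A)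
    (hfiber : ∀ᵐ y ∂mY, (μfam y).map p = Measure.dirac y)
    (hdis : mX = mY.bind μfam)
    -- `Ω`: a full-measure Borel set on which `W₂(μ_y, μ_{y'}) = d_Y(y, y')`
    (Ω : Set Y) (hΩm : MeasurableSet Ω) (hΩfull : mY Ωᶜ = 0)
    (hW : ∀ y ∈ Ω, ∀ y' ∈ Ω, W 2 (μfam y) (μfam y') = edist y y') :
    ∀ (x : X) (r : ℝ), 0 < r → p '' Metric.ball x r = Metric.ball (p x) r := by
  intro x r hr
  have hpm : Measurable p := hp.continuous.measurable
  have hμmeas : Measurable μfam :=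
    Measure.measurable_of_measurable_coe μfam (fun s hs => hmeas s hs)
  set Gs : Set Y := {y | (μfam y).map p = Measure.dirac y} with hGsdef
  have hGnull : mY Gsᶜ = 0 := by
    have h2 := ae_iff.mp hfiber
    simpa [hGsdef, Set.compl_setOf] using h2
  have hfull : ∀ s : Set Y, 0 < mY s → ∃ y₀ ∈ s, y₀ ∈ Ω ∧ y₀ ∈ Gs := by
    intro s hs
    by_contra h
    push_neg at h
    have hsub : s ⊆ Ωᶜ ∪ Gsᶜ := by
      intro y hy
      by_contra h2
      simp only [Set.mem_union, Set.mem_compl_iff, not_or, not_not] at h2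
      exact (h y hy h2.1) h2.2
    have hz : mY s = 0 := by
      refine le_antisymm ((measure_mono hsub).trans ?_) zero_le
      refine (measure_union_le _ _).trans_eq ?_
      rw [hΩfull, hGnull, add_zero]
    exact absurd hz hs.ne'
  apply Set.Subset.antisymm
  · rintro z ⟨w, hw, rfl⟩
    have h1 : dist (p w) (p x) ≤ dist w x := by simpa using hp.dist_le_mul w x
    exact Metric.mem_ball.mpr (lt_of_le_of_lt h1 (Metric.mem_ball.mp hw))
  · intro y' hy'
    set D := dist y' (p x) with hDdef
    have hD0 : 0 ≤ D := dist_nonneg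
    have hDr : D < r := Metric.mem_ball.mp hy'
    set c : ℝ := (r - D) / 20 with hcdef
    have hc : 0 < c := by rw [hcdef]; linarith
    have hq : ∀ n : ℕ, (0:ℝ) < c * (1/2)^n := fun n => by positivity
    -- initialization
    have hball : 0 < mX (Metric.ball x (c * (1/2)^0)) := hsuppX x _ (hq 0)
    have hbind : mX (Metric.ball x (c * (1/2)^0))
        = ∫⁻ y, μfam y (Metric.ball x (c * (1/2)^0)) ∂mY := by
      rw [hdis]
      exact Measure.bind_apply measurableSet_ball hμmeas.aemeasurable
    have hposset : 0 < mY {y | 0 < μfam y (Metric.ball x (c * (1/2)^0))} := by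
      by_contra h
      push_neg at h
      have h0 : mY {y | 0 < μfam y (Metric.ball x (c * (1/2)^0))} = 0 :=
        le_antisymm h zero_le
      have hae : ∀ᵐ y ∂mY, μfam y (Metric.ball x (c * (1/2)^0)) = 0 := by
        rw [ae_iff]
        convert h0 using 2
        ext y
        simp [pos_iff_ne_zero]
      have hzero : mX (Metric.ball x (c * (1/2)^0)) = 0 := by
        rw [hbind, lintegral_congr_ae hae, lintegral_zero]
      exact absurd hzero hball.ne'
    obtain ⟨y₀, hy₀pos, hy₀Ω, hy₀G⟩ := hfull _ hposset
    have hy₀d : dist y₀ y' ≤ D + c := by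
      obtain ⟨a, ha, hpa⟩ :=
        fiber_witness hpm (μfam y₀) hy₀G hy₀pos (measurableSet_singleton y₀)
      have h1 : dist (p a) (p x) ≤ dist a x := by simpa using hp.dist_le_mul a x
      have h2 : dist a x < c * (1/2)^0 := Metric.mem_ball.mp ha
      have h3 : dist y₀ y' ≤ dist y₀ (p x) + dist (p x) y' := dist_triangle _ _ _
      have h4 : dist y₀ (p x) ≤ dist a x := hpa ▸ h1
      have h5 : dist (p x) y' = D := dist_comm (p x) y'
      simp only [pow_zero, mul_one] at h2
      linarith
    -- the inductive step
    have key : ∀ (n : ℕ) (s : X × Y),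
        (s.2 ∈ Ω ∧ s.2 ∈ Gs ∧ 0 < μfam s.2 (Metric.ball s.1 (c * (1/2)^n)) ∧
          dist s.2 y' ≤ (if n = 0 then D + c else c * (1/2)^n)) →
        ∃ s' : X × Y, (s'.2 ∈ Ω ∧ s'.2 ∈ Gs ∧
            0 < μfam s'.2 (Metric.ball s'.1 (c * (1/2)^(n+1))) ∧
            dist s'.2 y' ≤ (if n + 1 = 0 then D + c else c * (1/2)^(n+1))) ∧
          dist s.1 s'.1 ≤ 2*(c*(1/2)^n) + (if n = 0 then D + c else c * (1/2)^n)
            + 2*(c*(1/2)^(n+1)) := by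
      rintro n ⟨x₀, y₀'⟩ ⟨hΩ1, hG1, hpos1, hd1⟩
      obtain ⟨y₂, hy₂ball, hy₂Ω, hy₂G⟩ :=
        hfull (Metric.ball y' (c * (1/2)^(n+1))) (hsuppY y' _ (hq (n+1)))
      haveI := hprob y₀'
      haveI := hprob y₂
      obtain ⟨x₂, hpos₂, hdist₂⟩ := step_lemma hp (μfam y₀') (μfam y₂) hG1 hy₂G
        (hW y₀' hΩ1 y₂ hy₂Ω) x₀ (hq n) (hq n) (hq (n+1)) hpos1
      refine ⟨(x₂, y₂), ⟨hy₂Ω, hy₂G, hpos₂, ?_⟩, ?_⟩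
      · simp only [if_neg (Nat.succ_ne_zero n)]
        exact (Metric.mem_ball.mp hy₂ball).le
      · have hyy₂ : dist y₀' y₂ ≤ (if n = 0 then D + c else c * (1/2)^n) + c * (1/2)^(n+1) := by
          refine (dist_triangle y₀' y' y₂).trans (add_le_add hd1 ?_)
          rw [dist_comm]
          exact (Metric.mem_ball.mp hy₂ball).le
        have h5 : dist x₀ x₂ < c*(1/2)^n + dist y₀' y₂ + c*(1/2)^n + c*(1/2)^(n+1) := hdist₂
        simp only []
        linarith
    choose! nxt hInv hd using key
    set f : ℕ → X × Y :=
      fun n => Nat.rec (motive := fun _ => X × Y) (x, y₀) (fun n s => nxt n s) n with hf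
    have hI : ∀ n, (f n).2 ∈ Ω ∧ (f n).2 ∈ Gs ∧
        0 < μfam (f n).2 (Metric.ball (f n).1 (c * (1/2)^n)) ∧
        dist (f n).2 y' ≤ (if n = 0 then D + c else c * (1/2)^n) := by
      intro n
      induction n with
      | zero => exact ⟨hy₀Ω, hy₀G, hy₀pos, by rw [if_pos rfl]; exact hy₀d⟩
      | succ n ih => exact hInv n (f n) ih
    have hstep : ∀ n, dist (f n).1 (f (n+1)).1
        ≤ 2*(c*(1/2)^n) + (if n = 0 then D + c else c*(1/2)^n) + 2*(c*(1/2)^(n+1)) :=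
      fun n => hd n (f n) (hI n)
    have hgeom : ∀ n, dist (f n).1 (f (n+1)).1 ≤ (D + 5*c) * (1/2)^n := by
      intro n
      refine (hstep n).trans ?_
      rcases Nat.eq_zero_or_pos n with h | h
      · subst h
        norm_num
        linarith
      · rw [if_neg h.ne', pow_succ]
        have h2 : (0:ℝ) < (1/2:ℝ)^n := by positivity
        have h5 : 0 ≤ (D + c) * (1/2:ℝ)^n := mul_nonneg (by linarith) h2.le
        nlinarith
    have hcauchy : CauchySeq (fun n => (f n).1) :=
      cauchySeq_of_le_geometric (1/2) (D+5*c) (by norm_num) hgeom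
    obtain ⟨xlim, hxlim⟩ := cauchySeq_tendsto_of_complete hcauchy
    have hbound : ∀ n, dist x (f n).1 ≤ (if n = 0 then 0 else D) + 8*c*(1 - (1/2)^n) := by
      intro n
      induction n with
      | zero => simp [show (f 0).1 = x from rfl]
      | succ n ih =>
        have h2 := hstep n
        have h4 : dist x (f (n+1)).1 ≤ dist x (f n).1 + dist (f n).1 (f (n+1)).1 :=
          dist_triangle _ _ _
        rw [if_neg (Nat.succ_ne_zero n), pow_succ]
        rcases Nat.eq_zero_or_pos n with h | h
        · subst h
          rw [if_pos rfl] at h2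
          rw [if_pos rfl] at ih
          norm_num at h2 ih h4 ⊢
          have h0 : dist x (f 0).1 = 0 := by rw [ih]; exact dist_self _
          linarith
        · rw [if_neg h.ne'] at ih
          rw [if_neg h.ne', pow_succ] at h2
          nlinarith
    have hxd : dist x xlim ≤ D + 8*c := by
      refine le_of_tendsto (tendsto_const_nhds.dist hxlim) (Filter.Eventually.of_forall fun n => ?_)
      have h1 := hbound n
      have h2 : (0:ℝ) ≤ (1/2:ℝ)^n := by positivity
      have h3 : (1/2:ℝ)^n ≤ 1 := by
        refine pow_le_one₀ (by norm_num) (by norm_num)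
      have h5 : 0 ≤ c * (1/2:ℝ)^n := by positivity
      split_ifs at h1 with h
      · nlinarith
      · nlinarith
    have hfin : dist x xlim < r := by
      rw [hcdef] at hxd
      linarith
    have hplim : Tendsto (fun n => p (f n).1) atTop (nhds (p xlim)) :=
      (hp.continuous.tendsto xlim).comp hxlim
    have hpy : Tendsto (fun n => p (f n).1) atTop (nhds y') := by
      rw [tendsto_iff_dist_tendsto_zero]
      refine squeeze_zero' (g := fun n => 2*(c*(1/2)^n))
        (Filter.Eventually.of_forall fun n => dist_nonneg)
        (Filter.eventually_atTop.mpr ⟨1, fun n hn => ?_⟩) ?_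
      · obtain ⟨hΩn, hGn, hposn, hdn⟩ := hI n
        obtain ⟨a, ha, hpa⟩ :=
          fiber_witness hpm (μfam (f n).2) hGn hposn (measurableSet_singleton _)
        have h1 : dist (p (f n).1) (f n).2 ≤ c * (1/2)^n := by
          rw [← hpa]
          refine le_trans (by simpa using hp.dist_le_mul (f n).1 a) ?_
          rw [dist_comm]
          exact (Metric.mem_ball.mp ha).le
        have h2 : dist (f n).2 y' ≤ c * (1/2)^n := by
          rwa [if_neg (by omega : n ≠ 0)] at hdn
        calc dist (p (f n).1) y' ≤ dist (p (f n).1) (f n).2 + dist (f n).2 y' :=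
              dist_triangle _ _ _
          _ ≤ 2*(c*(1/2)^n) := by linarith
      · have h1 : Tendsto (fun n : ℕ => ((1:ℝ)/2)^n) atTop (nhds 0) :=
          tendsto_pow_atTop_nhds_zero_of_lt_one (by norm_num) (by norm_num)
        have h2 := h1.const_mul (2*c)
        rw [mul_zero] at h2
        refine h2.congr fun n => by ring
    have hpeq : p xlim = y' := tendsto_nhds_unique hplim hpy
    exact ⟨xlim, Metric.mem_ball.mpr (by rw [dist_comm]; exact hfin), hpeq⟩
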